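/- If a gem (M, c) has no 2-edge cut, then every 3-edge cut of M consists of the three edges incident with a single common vertex; in particular (this being the cubic-graph formulation of the property) M is cyclically-4-edge-connected. -/

import Mathlib

/-- The three colours used in a gem. -/
inductive Colour : Type
  | red | yellow | blue
deriving DecidableEq

/-- A proper edge colouring of a graph: two distinct edges sharing an endpoint
receive different colours. -/
def ProperEdgeColouring {V : Type*} {α : Type*} (G : SimpleGraph V) (c : Sym2 V → α) : Prop :=
  ∀ e₁ ∈ G.edgeSet, ∀ e₂ ∈ G.edgeSet, e₁ ≠ e₂ → (∃ v, v ∈ e₁ ∧ v ∈ e₂) → c e₁ ≠ c e₂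

/-- A cubic graph: every vertex has degree 3. -/
def IsCubic {V : Type*} (G : SimpleGraph V) : Prop :=
  ∀ v : V, (G.neighborSet v).ncard = 3

/-- The edge cut determined by a vertex set `S`: the set of edges of `G`
with exactly one endpoint in `S`. -/
def edgeCut {V : Type*} (G : SimpleGraph V) (S : Set V) : Set (Sym2 V) :=
  {e | ∃ u v, e = s(u, v) ∧ G.Adj u v ∧ u ∈ S ∧ v ∉ S}

/-- The spanning subgraph of `G` formed by the edges coloured `x` or `y`. -/
def twoColourSubgraph {V : Type*} {α : Type*} (G : SimpleGraph V) (c : Sym2 V → α)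
    (x y : α) : SimpleGraph V where
  Adj u v := G.Adj u v ∧ (c s(u, v) = x ∨ c s(u, v) = y)
  symm := by
    constructor
    intro u v h
    refine ⟨h.1.symm, ?_⟩
    rw [Sym2.eq_swap]
    exact h.2
  loopless := ⟨fun v h => G.irrefl h.1⟩

/-- A gem: a connected cubic graph with a proper 3-edge-colouring (red, yellow,
blue) such that every connected component of the spanning subgraph formed by
the red and blue edges is a cycle of length 4 (equivalently, for a simple
graph: that subgraph is 2-regular and each of its connected components has
exactly 4 vertices). -/
structure IsGem {V : Type*} (M : SimpleGraph V) (c : Sym2 V → Colour) : Prop where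
  connected : M.Connected
  cubic : IsCubic M
  proper : ProperEdgeColouring M c
  rb_two_regular : ∀ v : V,
    ((twoColourSubgraph M c Colour.red Colour.blue).neighborSet v).ncard = 2
  rb_components_card4 : ∀ v : V,
    ((twoColourSubgraph M c Colour.red Colour.blue).connectedComponentMk v).supp.ncard = 4

section Helpers

instance : Fintype Colour :=
  ⟨{Colour.red, Colour.yellow, Colour.blue}, by intro x; cases x <;> simp⟩

variable {V : Type*} [Fintype V] {M : SimpleGraph V} {c : Sym2 V → Colour}

/-- Each vertex has exactly one neighbour joined by an edge of each colour. -/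
lemma partner_exists_unique (hgem : IsGem M c) (v : V) (x : Colour) :
    ∃! w, M.Adj v w ∧ c s(v, w) = x := by
  classical
  have hcard : (M.neighborSet v).ncard = 3 := hgem.cubic v
  have hinj : Set.InjOn (fun w => c s(v, w)) (M.neighborSet v) := by
    intro w1 h1 w2 h2 heq
    by_contra hne
    have he : s(v, w1) ≠ s(v, w2) := by
      intro h
      rcases Sym2.eq_iff.mp h with ⟨_, h2⟩ | ⟨h1', h2'⟩
      · exact hne h2
      · exact hne (h2'.trans h1')
    exact hgem.proper _ (M.mem_edgeSet.mpr h1) _ (M.mem_edgeSet.mpr h2) he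
      ⟨v, Sym2.mem_mk_left _ _, Sym2.mem_mk_left _ _⟩ heq
  have himg : (fun w => c s(v, w)) '' (M.neighborSet v) = Set.univ := by
    apply Set.eq_of_subset_of_ncard_le (Set.subset_univ _)
    · rw [Set.ncard_image_of_injOn hinj, hcard, Set.ncard_univ, Nat.card_eq_fintype_card]
      decide
  have hx : x ∈ (fun w => c s(v, w)) '' (M.neighborSet v) := by rw [himg]; trivial
  obtain ⟨w, hw, hcw⟩ := hx
  have hcw2 : c s(v, w) = x := hcw
  refine ⟨w, ⟨hw, hcw2⟩, ?_⟩
  rintro w' ⟨hw', hcw'⟩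
  exact hinj hw' hw (hcw'.trans hcw2.symm)

/-- The unique neighbour of `v` joined by an edge coloured `x`. -/
noncomputable def pt (hgem : IsGem M c) (v : V) (x : Colour) : V :=
  (partner_exists_unique hgem v x).choose

lemma pt_adj (hgem : IsGem M c) (v : V) (x : Colour) : M.Adj v (pt hgem v x) :=
  (partner_exists_unique hgem v x).choose_spec.1.1

lemma pt_colour (hgem : IsGem M c) (v : V) (x : Colour) : c s(v, pt hgem v x) = x :=
  (partner_exists_unique hgem v x).choose_spec.1.2

lemma pt_eq (hgem : IsGem M c) {v w : V} {x : Colour} (h : M.Adj v w)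
    (hc : c s(v, w) = x) : w = pt hgem v x :=
  (partner_exists_unique hgem v x).choose_spec.2 w ⟨h, hc⟩

lemma pt_pt (hgem : IsGem M c) (v : V) (x : Colour) : pt hgem (pt hgem v x) x = v := by
  have h1 := (pt_adj hgem v x).symm
  have h2 : c s(pt hgem v x, v) = x := by rw [Sym2.eq_swap]; exact pt_colour hgem v x
  exact (pt_eq hgem h1 h2).symm

lemma pt_ne (hgem : IsGem M c) (v : V) (x : Colour) : pt hgem v x ≠ v := by
  intro h
  have h1 := pt_adj hgem v x
  rw [h] at h1
  exact M.irrefl h1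

lemma adj_eq_pt (hgem : IsGem M c) {v w : V} (h : M.Adj v w) :
    w = pt hgem v (c s(v, w)) := pt_eq hgem h rfl

/-- A finite set closed under a fixed-point-free involution has even cardinality. -/
lemma even_ncard_of_invol {α : Type*} (p : α → α)
    (hinv : ∀ v, p (p v) = v) (hne : ∀ v, p v ≠ v) :
    ∀ n : ℕ, ∀ D : Set α, D.Finite → (∀ v ∈ D, p v ∈ D) → D.ncard = n → Even n := by
  intro n
  induction n using Nat.strong_induction_on with
  | _ n ih =>
    intro D hfin hcl hcard
    rcases D.eq_empty_or_nonempty with h | ⟨v, hv⟩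
    · subst h
      simp only [Set.ncard_empty] at hcard
      subst hcard
      exact Even.zero
    · have hvne : v ≠ p v := (hne v).symm
      have hsub : ({v, p v} : Set α) ⊆ D := by
        intro w hw
        simp only [Set.mem_insert_iff, Set.mem_singleton_iff] at hw
        rcases hw with rfl | rfl
        · exact hv
        · exact hcl v hv
      have hpair : ({v, p v} : Set α).ncard = 2 := Set.ncard_pair hvne
      have h2n : 2 ≤ n := by
        rw [← hcard, ← hpair]; exact Set.ncard_le_ncard hsub hfin
      have hcl' : ∀ w ∈ D \ {v, p v}, p w ∈ D \ {v, p v} := by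
        intro w hw
        simp only [Set.mem_diff, Set.mem_insert_iff, Set.mem_singleton_iff] at hw ⊢
        obtain ⟨hwD, hwn⟩ := hw
        push_neg at hwn
        refine ⟨hcl w hwD, ?_⟩
        rintro (h | h)
        · exact hwn.2 (by rw [← h, hinv])
        · have := congrArg p h
          rw [hinv, hinv] at this
          exact hwn.1 this
      have hcard' : (D \ {v, p v}).ncard = n - 2 := by
        rw [Set.ncard_diff hsub (Set.toFinite _), hcard, hpair]
      have heven : Even (n - 2) := ih (n - 2) (by omega) _ hfin.diff hcl' hcard'
      rcases heven with ⟨k, hk⟩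
      exact ⟨k + 1, by omega⟩

lemma edgeCut_subset_compl (S : Set V) : edgeCut M S ⊆ edgeCut M Sᶜ := by
  rintro e ⟨p, q, rfl, hadj, hp, hq⟩
  exact ⟨q, p, Sym2.eq_swap, hadj.symm, hq, fun h => h hp⟩

lemma edgeCut_compl (S : Set V) : edgeCut M Sᶜ = edgeCut M S := by
  apply Set.Subset.antisymm
  · have := edgeCut_subset_compl (M := M) Sᶜ
    rwa [compl_compl] at this
  · exact edgeCut_subset_compl S

/-- In a gem, a 3-edge cut has exactly one crossing edge of each colour. -/
lemma crossOne (hgem : IsGem M c) (S : Set V) (hcut : (edgeCut M S).ncard = 3)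
    (x : Colour) : ∃! w, w ∈ S ∧ pt hgem w x ∉ S := by
  classical
  set Cv : Colour → Set V := fun y => {v | v ∈ S ∧ pt hgem v y ∉ S} with hCv
  set Ce : Colour → Set (Sym2 V) := fun y => {e | e ∈ edgeCut M S ∧ c e = y} with hCe
  have himg : ∀ y, Ce y = (fun v => s(v, pt hgem v y)) '' Cv y := by
    intro y
    apply Set.Subset.antisymm
    · rintro e ⟨⟨p, q, rfl, hadj, hp, hq⟩, hcol⟩
      refine ⟨p, ⟨hp, ?_⟩, ?_⟩
      · rw [← (pt_eq hgem hadj hcol)]; exact hq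
      · show s(p, pt hgem p y) = s(p, q)
        rw [← (pt_eq hgem hadj hcol)]
    · rintro e ⟨v, ⟨hvS, hvn⟩, rfl⟩
      exact ⟨⟨v, pt hgem v y, rfl, pt_adj hgem v y, hvS, hvn⟩, pt_colour hgem v y⟩
  have hinjOn : ∀ y, Set.InjOn (fun v => s(v, pt hgem v y)) (Cv y) := by
    intro y v1 hv1 v2 hv2 heq
    have heq' : s(v1, pt hgem v1 y) = s(v2, pt hgem v2 y) := heq
    rcases Sym2.eq_iff.mp heq' with ⟨h, _⟩ | ⟨h1, _⟩
    · exact h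
    · exact absurd (h1 ▸ hv1.1) hv2.2
  have hcardCe : ∀ y, (Ce y).ncard = (Cv y).ncard := by
    intro y; rw [himg y, Set.ncard_image_of_injOn (hinjOn y)]
  have hdecomp : edgeCut M S = Ce Colour.red ∪ (Ce Colour.yellow ∪ Ce Colour.blue) := by
    apply Set.Subset.antisymm
    · intro e he
      cases h : c e with
      | red => exact Or.inl ⟨he, h⟩
      | yellow => exact Or.inr (Or.inl ⟨he, h⟩)
      | blue => exact Or.inr (Or.inr ⟨he, h⟩)
    · rintro e (⟨he, _⟩ | ⟨he, _⟩ | ⟨he, _⟩) <;> exact he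
  have hdisj : ∀ y z : Colour, y ≠ z → Disjoint (Ce y) (Ce z) := by
    intro y z hyz
    rw [Set.disjoint_left]
    rintro e ⟨_, h1⟩ ⟨_, h2⟩
    exact hyz (h1 ▸ h2 ▸ rfl)
  have hsum : (Cv Colour.red).ncard + ((Cv Colour.yellow).ncard + (Cv Colour.blue).ncard)
      = 3 := by
    rw [← hcardCe, ← hcardCe, ← hcardCe, ← Set.ncard_union_eq
      (hdisj Colour.yellow Colour.blue (by simp)) (Set.toFinite _) (Set.toFinite _),
      ← Set.ncard_union_eq ?_ (Set.toFinite _) (Set.toFinite _), ← hdecomp, hcut]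
    exact Set.disjoint_union_right.mpr
      ⟨hdisj Colour.red Colour.yellow (by simp), hdisj Colour.red Colour.blue (by simp)⟩
  have hparity : ∀ y, (Cv y).ncard % 2 = S.ncard % 2 := by
    intro y
    set Dv : Set V := {v | v ∈ S ∧ pt hgem v y ∈ S} with hDv
    have hS : S = Cv y ∪ Dv := by
      apply Set.Subset.antisymm
      · intro v hv
        by_cases h : pt hgem v y ∈ S
        · exact Or.inr ⟨hv, h⟩
        · exact Or.inl ⟨hv, h⟩
      · rintro v (⟨h, _⟩ | ⟨h, _⟩) <;> exact h
    have hdisj' : Disjoint (Cv y) Dv := by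
      rw [Set.disjoint_left]; rintro v ⟨_, h1⟩ ⟨_, h2⟩; exact h1 h2
    have heven : Even Dv.ncard := by
      apply even_ncard_of_invol (fun v => pt hgem v y)
        (fun v => pt_pt hgem v y) (fun v => pt_ne hgem v y) _ Dv (Set.toFinite _) _ rfl
      rintro v ⟨h1, h2⟩
      exact ⟨h2, by rw [pt_pt]; exact h1⟩
    rw [hS, Set.ncard_union_eq hdisj' (Set.toFinite _) (Set.toFinite _)]
    rcases heven with ⟨k, hk⟩
    omega
  have h1 : (Cv x).ncard = 1 := by
    have hr := hparity Colour.red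
    have hy := hparity Colour.yellow
    have hb := hparity Colour.blue
    have hx := hparity x
    cases x <;> omega
  obtain ⟨w, hw⟩ := Set.ncard_eq_one.mp h1
  refine ⟨w, ?_, ?_⟩
  · have hm : w ∈ Cv x := by rw [hw]; rfl
    exact hm
  · intro v hv
    have hm : v ∈ Cv x := hv
    rw [hw] at hm; exact hm

lemma incidenceSet_eq_image (v : V) :
    M.incidenceSet v = (fun w => s(v, w)) '' M.neighborSet v := by
  apply Set.Subset.antisymm
  · intro e
    induction e using Sym2.ind with
    | _ a b =>
      rintro ⟨hE, hv⟩
      rcases Sym2.mem_iff.mp hv with rfl | rfl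
      · exact ⟨b, M.mem_edgeSet.mp hE, rfl⟩
      · exact ⟨a, (M.mem_edgeSet.mp hE).symm, Sym2.eq_swap⟩
  · rintro e ⟨w, hw, rfl⟩
    exact ⟨M.mem_edgeSet.mpr hw, Sym2.mem_mk_left _ _⟩

lemma ncard_incidenceSet (hgem : IsGem M c) (v : V) :
    (M.incidenceSet v).ncard = 3 := by
  rw [incidenceSet_eq_image v, Set.ncard_image_of_injOn, hgem.cubic v]
  intro w1 _ w2 _ h
  have h' : s(v, w1) = s(v, w2) := h
  rcases Sym2.eq_iff.mp h' with ⟨_, h2⟩ | ⟨h1, h2⟩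
  · exact h2
  · exact h2.trans h1

/-- Key lemma: if some vertex `u ∈ S` has both its red and blue partners
outside `S`, then the 3-cut is the star at `u`. -/
lemma key_lemma (hgem : IsGem M c)
    (hno2cut : ¬ ∃ S : Set V, S.Nonempty ∧ Sᶜ.Nonempty ∧ (edgeCut M S).ncard = 2)
    (S : Set V) (hcut : (edgeCut M S).ncard = 3) (u : V) (hu : u ∈ S)
    (hr : pt hgem u Colour.red ∉ S) (hb : pt hgem u Colour.blue ∉ S) :
    ∃ v : V, edgeCut M S = M.incidenceSet v := by
  classical
  obtain ⟨w, ⟨hwS, hwy⟩, hwuniq⟩ := crossOne hgem S hcut Colour.yellow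
  obtain ⟨ur, hurm, huruniq⟩ := crossOne hgem S hcut Colour.red
  obtain ⟨ub, hubm, hubuniq⟩ := crossOne hgem S hcut Colour.blue
  have hur : ur = u := (huruniq u ⟨hu, hr⟩).symm
  have hub : ub = u := (hubuniq u ⟨hu, hb⟩).symm
  by_cases hy : pt hgem u Colour.yellow ∈ S
  · -- derive a 2-edge cut, contradiction
    exfalso
    have hwu : w ≠ u := fun h => hwy (h ▸ hy)
    have hyT : pt hgem u Colour.yellow ∈ S \ {u} := ⟨hy, pt_ne hgem u Colour.yellow⟩
    have hTeq : edgeCut M (S \ {u}) =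
        {s(w, pt hgem w Colour.yellow), s(u, pt hgem u Colour.yellow)} := by
      apply Set.Subset.antisymm
      · rintro e ⟨a, b, rfl, hadj, ⟨haS, hau'⟩, hbT⟩
        have hau : a ≠ u := hau'
        simp only [Set.mem_insert_iff, Set.mem_singleton_iff]
        by_cases hbS : b ∈ S
        · -- b ∈ S and b ∉ S \ {u}, so b = u
          have hbu : b = u := by
            by_contra h
            exact hbT ⟨hbS, h⟩
          have hadj' : M.Adj u a := hbu ▸ hadj.symm
          have ha' : a = pt hgem u (c s(u, a)) := adj_eq_pt hgem hadj'
          cases hcol : c s(u, a) with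
          | red => rw [hcol] at ha'; exact absurd (ha' ▸ haS) hr
          | blue => rw [hcol] at ha'; exact absurd (ha' ▸ haS) hb
          | yellow =>
              rw [hcol] at ha'
              right
              rw [hbu, ← ha']
              exact Sym2.eq_swap
        · -- e crosses S, and a is the unique crossing vertex of its colour
          have hb' : b = pt hgem a (c s(a, b)) := adj_eq_pt hgem hadj
          cases hcol : c s(a, b) with
          | red =>
              rw [hcol] at hb'
              exact absurd ((huruniq a ⟨haS, hb' ▸ hbS⟩).trans hur) hau
          | blue =>
              rw [hcol] at hb'
              exact absurd ((hubuniq a ⟨haS, hb' ▸ hbS⟩).trans hub) hau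
          | yellow =>
              rw [hcol] at hb'
              have haw : a = w := hwuniq a ⟨haS, hb' ▸ hbS⟩
              left
              rw [← haw, ← hb']
      · intro e he
        simp only [Set.mem_insert_iff, Set.mem_singleton_iff] at he
        rcases he with rfl | rfl
        · exact ⟨w, pt hgem w Colour.yellow, rfl, pt_adj hgem w Colour.yellow,
            ⟨hwS, hwu⟩, fun h => hwy h.1⟩
        · exact ⟨pt hgem u Colour.yellow, u, Sym2.eq_swap,
            (pt_adj hgem u Colour.yellow).symm, hyT, fun h => h.2 rfl⟩
    have hne2 : s(w, pt hgem w Colour.yellow) ≠ s(u, pt hgem u Colour.yellow) := by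
      intro h
      rcases Sym2.eq_iff.mp h with ⟨h1, _⟩ | ⟨_, h2⟩
      · exact hwu h1
      · exact hwy (h2 ▸ hu)
    apply hno2cut
    refine ⟨S \ {u}, ⟨_, hyT⟩, ⟨u, fun h => h.2 rfl⟩, ?_⟩
    rw [hTeq, Set.ncard_pair hne2]
  · -- all three edges at u cross: the cut is the star at u
    refine ⟨u, ?_⟩
    have hsub : M.incidenceSet u ⊆ edgeCut M S := by
      intro e he
      rw [incidenceSet_eq_image u] at he
      obtain ⟨z, hz, rfl⟩ := he
      have hz' : z = pt hgem u (c s(u, z)) := adj_eq_pt hgem hz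
      refine ⟨u, z, rfl, hz, hu, ?_⟩
      cases hcol : c s(u, z) with
      | red => rw [hcol] at hz'; exact hz' ▸ hr
      | blue => rw [hcol] at hz'; exact hz' ▸ hb
      | yellow => rw [hcol] at hz'; exact hz' ▸ hy
    exact (Set.eq_of_subset_of_ncard_le hsub
      (by rw [hcut, ncard_incidenceSet hgem u]) (Set.toFinite _)).symm

end Helpers

/-- If a gem has no 2-edge cut, then every 3-edge cut consists of the three
edges incident with a single common vertex (the cubic-graph formulation of
being cyclically-4-edge-connected). -/
theorem gem_cyclically_four_edge_connected {V : Type*} [Fintype V]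
    (M : SimpleGraph V) (c : Sym2 V → Colour) (hgem : IsGem M c)
    (hno2cut : ¬ ∃ S : Set V, S.Nonempty ∧ Sᶜ.Nonempty ∧ (edgeCut M S).ncard = 2) :
    ∀ S : Set V, S.Nonempty → Sᶜ.Nonempty → (edgeCut M S).ncard = 3 →
      ∃ v : V, edgeCut M S = M.incidenceSet v := by
  classical
  intro S hS hSc hcut
  obtain ⟨u, ⟨huS, hua⟩, _⟩ := crossOne hgem S hcut Colour.red
  obtain ⟨a, ha⟩ : ∃ a, a = pt hgem u Colour.red := ⟨_, rfl⟩
  obtain ⟨b, hb⟩ : ∃ b, b = pt hgem u Colour.blue := ⟨_, rfl⟩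
  obtain ⟨d, hd⟩ : ∃ d, d = pt hgem a Colour.blue := ⟨_, rfl⟩
  have haS : a ∉ S := ha ▸ hua
  have hH : ∀ (v : V) (x : Colour), x = Colour.red ∨ x = Colour.blue →
      (twoColourSubgraph M c Colour.red Colour.blue).Adj v (pt hgem v x) := by
    rintro v x (rfl | rfl)
    · exact (⟨pt_adj hgem v Colour.red, Or.inl (pt_colour hgem v Colour.red)⟩ : M.Adj v _ ∧ (_ ∨ _))
    · exact (⟨pt_adj hgem v Colour.blue, Or.inr (pt_colour hgem v Colour.blue)⟩ : M.Adj v _ ∧ (_ ∨ _))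
  have hau : a ≠ u := ha ▸ pt_ne hgem u Colour.red
  have hbu : b ≠ u := hb ▸ pt_ne hgem u Colour.blue
  have hab : a ≠ b := by
    intro h
    have h1 : c s(u, a) = Colour.red := by rw [ha]; exact pt_colour hgem u Colour.red
    have h2 : c s(u, b) = Colour.blue := by rw [hb]; exact pt_colour hgem u Colour.blue
    rw [h] at h1
    rw [h1] at h2
    exact Colour.noConfusion h2
  have hda : d ≠ a := hd ▸ pt_ne hgem a Colour.blue
  have hpa : pt hgem a Colour.red = u := by rw [ha, pt_pt]
  have hdu : d ≠ u := by
    intro h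
    have h1 : pt hgem d Colour.blue = a := by rw [hd, pt_pt]
    rw [h, ← hb] at h1
    exact hab h1.symm
  have hdb : d ≠ b := by
    intro h
    have h1 : pt hgem d Colour.blue = a := by rw [hd, pt_pt]
    have h2 : pt hgem b Colour.blue = u := by rw [hb, pt_pt]
    rw [h, h2] at h1
    exact hau h1.symm
  -- the red-blue component of u is exactly {u, a, b, d}
  have hsupp : ((twoColourSubgraph M c Colour.red Colour.blue).connectedComponentMk u).supp
      = {u, a, b, d} := by
    have hsub : ({u, a, b, d} : Set V) ⊆
        ((twoColourSubgraph M c Colour.red Colour.blue).connectedComponentMk u).supp := by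
      intro v hv
      simp only [Set.mem_insert_iff, Set.mem_singleton_iff] at hv
      rcases hv with rfl | rfl | rfl | rfl
      · rfl
      · rw [SimpleGraph.ConnectedComponent.mem_supp_iff, ha]
        exact (SimpleGraph.ConnectedComponent.connectedComponentMk_eq_of_adj
          (hH u Colour.red (Or.inl rfl))).symm
      · rw [SimpleGraph.ConnectedComponent.mem_supp_iff, hb]
        exact (SimpleGraph.ConnectedComponent.connectedComponentMk_eq_of_adj
          (hH u Colour.blue (Or.inr rfl))).symm
      · rw [SimpleGraph.ConnectedComponent.mem_supp_iff, hd, ha]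
        exact ((SimpleGraph.ConnectedComponent.connectedComponentMk_eq_of_adj
            (hH (pt hgem u Colour.red) Colour.blue (Or.inr rfl))).symm).trans
          (SimpleGraph.ConnectedComponent.connectedComponentMk_eq_of_adj
            (hH u Colour.red (Or.inl rfl))).symm
    have hcard4 : ({u, a, b, d} : Set V).ncard = 4 := by
      rw [Set.ncard_insert_of_notMem
          (by simp [hau.symm, hbu.symm, hdu.symm] : u ∉ ({a, b, d} : Set V)),
        Set.ncard_insert_of_notMem (by simp [hab, hda.symm] : a ∉ ({b, d} : Set V)),
        Set.ncard_pair hdb.symm]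
    exact (Set.eq_of_subset_of_ncard_le hsub
      (by rw [hgem.rb_components_card4 u, hcard4]) (Set.toFinite _)).symm
  -- the fourth edge of the 4-cycle, from b to d, is red
  have hbd : pt hgem b Colour.red = d := by
    have hmem : pt hgem b Colour.red ∈ ({u, a, b, d} : Set V) := by
      rw [← hsupp, SimpleGraph.ConnectedComponent.mem_supp_iff]
      have h1 := SimpleGraph.ConnectedComponent.connectedComponentMk_eq_of_adj
        (hH b Colour.red (Or.inl rfl))
      have h2 := SimpleGraph.ConnectedComponent.connectedComponentMk_eq_of_adj
        (hH u Colour.blue (Or.inr rfl))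
      rw [← hb] at h2
      exact h1.symm.trans h2.symm
    simp only [Set.mem_insert_iff, Set.mem_singleton_iff] at hmem
    rcases hmem with h | h | h | h
    · exfalso
      have h1 : pt hgem u Colour.red = b := by rw [← h, pt_pt]
      rw [← ha] at h1
      exact hab h1
    · exfalso
      have h1 : pt hgem a Colour.red = b := by rw [← h, pt_pt]
      rw [hpa] at h1
      exact hbu h1.symm
    · exact absurd h (pt_ne hgem b Colour.red)
    · exact h
  -- b and d lie on the same side of the cut
  obtain ⟨ur, _, huruniq⟩ := crossOne hgem S hcut Colour.red
  have huru : ur = u := (huruniq u ⟨huS, hua⟩).symm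
  have hside : b ∈ S ↔ d ∈ S := by
    constructor
    · intro hbS
      by_contra hdS
      exact hbu ((huruniq b ⟨hbS, hbd ▸ hdS⟩).trans huru)
    · intro hdS
      by_contra hbS
      have hdb' : pt hgem d Colour.red = b := by rw [← hbd, pt_pt]
      exact hdu ((huruniq d ⟨hdS, hdb' ▸ hbS⟩).trans huru)
  by_cases hbS : b ∈ S
  · -- work in the complement: a ∈ Sᶜ has both its partners in S
    have hdS : d ∈ S := hside.mp hbS
    have hcut' : (edgeCut M Sᶜ).ncard = 3 := by rw [edgeCut_compl]; exact hcut
    obtain ⟨v, hv⟩ := key_lemma hgem hno2cut Sᶜ hcut' a haS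
      (by rw [hpa]; exact fun h => h huS)
      (by rw [← hd]; exact fun h => h hdS)
    exact ⟨v, by rw [← edgeCut_compl S, hv]⟩
  · -- u ∈ S has both its partners outside S
    have hdS : d ∉ S := fun h => hbS (hside.mpr h)
    exact key_lemma hgem hno2cut S hcut u huS hua (hb ▸ hbS)
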